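/- Let G be a finite directed graph on the vertex set {1,…,n} and let q be a prime power. Suppose f : F_q^n → F_q^ℓ is a linear map which is the encoding function of an index code for G over F_q, i.e., there exist decoding functions g_i : F_q^ℓ × F_q^{N(i)} → F_q with g_i(f(y), y restricted to N(i)) = y_i for all y ∈ F_q^n and all vertices i. Then the kernel ker f = { y ∈ F_q^n : f(y) = 0 } is an RDSS code for G over F_q, and its size is q^{n − rank(f)}. -/

import Mathlib

/-- A recoverable distributed storage system (RDSS) code for the directed graph with
adjacency relation `Adj` on `Fin n`, over alphabet `A`. -/
def IsRDSS {n : ℕ} {A : Type*} (Adj : Fin n → Fin n → Prop) (C : Set (Fin n → A)) : Prop :=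
  ∀ i : Fin n, ∀ x ∈ C, ∀ y ∈ C, (∀ j : Fin n, Adj i j → x j = y j) → x i = y i

/-- the kernel of the (linear) encoding map of a linear index code
for `G` over a finite field `F` of size `q` is an RDSS code for `G` of size
`q^{n − rank f}`. -/
theorem stmt18 {n l : ℕ} (hn : 1 ≤ n) {F : Type} [Field F] [Fintype F] {q : ℕ}
    (hq : Fintype.card F = q)
    (Adj : Fin n → Fin n → Prop) (hirr : ∀ i, ¬ Adj i i)
    (f : (Fin n → F) →ₗ[F] (Fin l → F))
    (g : (i : Fin n) → (Fin l → F) → ({j : Fin n // Adj i j} → F) → F)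
    (hg : ∀ y : Fin n → F, ∀ i : Fin n, g i (f y) (fun j => y j.1) = y i) :
    IsRDSS Adj {y : Fin n → F | f y = 0} ∧
      ({y : Fin n → F | f y = 0}).ncard =
        q ^ (n - Module.finrank F (LinearMap.range f)) := by
  constructor
  · intro i x hx y hy hxy
    have h1 := hg x i
    have h2 := hg y i
    simp only [Set.mem_setOf_eq] at hx hy
    rw [hx] at h1
    rw [hy] at h2
    have hfun : (fun j : {j // Adj i j} => x j.1) = fun j => y j.1 :=
      funext fun j => hxy j.1 j.2
    rw [← h1, ← h2, hfun]
  · have hset : {y : Fin n → F | f y = 0} = (LinearMap.ker f : Set (Fin n → F)) := by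
      ext y; simp [LinearMap.mem_ker]
    rw [hset, ← Nat.card_coe_set_eq]
    have : Fintype (LinearMap.ker f) := Fintype.ofFinite _
    have hker : Nat.card (LinearMap.ker f) = q ^ Module.finrank F (LinearMap.ker f) := by
      rw [Nat.card_eq_fintype_card, Module.card_eq_pow_finrank (K := F), hq]
    have hrn := LinearMap.finrank_range_add_finrank_ker f
    have hdom : Module.finrank F (Fin n → F) = n := Module.finrank_fin_fun F
    have hle : Module.finrank F (LinearMap.range f) ≤ n := by omega
    have : n - Module.finrank F (LinearMap.range f) = Module.finrank F (LinearMap.ker f) := by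
      omega
    rw [this]
    exact hker
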